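/- Let G be a finite group, H a subgroup, and x ∈ G \ H with HxH = Hx⁻¹H and |H|/|H ∩ H^x| even. Then for every integer b with 0 ≤ b ≤ |H|, there exist b pairwise disjoint right transversals of H in HxH whose union is inverse-closed. -/

import Mathlib

open scoped Pointwise

/-- T is a right transversal of H in A: T ⊆ A and T meets the right coset of
each element of A exactly once. -/
def IsRightTransversalOn {G : Type*} [Group G] (H : Subgroup G) (T A : Set G) : Prop :=
  T ⊆ A ∧ ∀ g ∈ A, ∃! t, t ∈ T ∧ t * g⁻¹ ∈ H

namespace StmtAux

lemma waterfill (κ : ℕ) : ∀ (P q : ℕ), q ≤ P * κ → ∑ j ∈ Finset.range P, min κ (q - j * κ) = q := by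
  intro P
  induction P with
  | zero => intro q hq; simp at hq ⊢; omega
  | succ P ih =>
    intro q hq
    rw [Finset.sum_range_succ']
    have h1 : ∀ j ∈ Finset.range P, min κ (q - (j + 1) * κ) = min κ ((q - κ) - j * κ) := by
      intro j _; congr 1; ring_nf; omega
    rw [Finset.sum_congr rfl h1, ih (q - κ) (by have hs : (P+1)*κ = P*κ + κ := Nat.succ_mul P κ; omega)]
    rcases le_total κ q with h | h
    · rw [Nat.zero_mul, Nat.sub_zero, min_eq_left h]; omega
    · rw [Nat.zero_mul, Nat.sub_zero, min_eq_right h]; omega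

lemma ncard_biUnion {α ι : Type*} (s : Finset ι) (f : ι → Set α)
    (hfin : ∀ i ∈ s, (f i).Finite)
    (hd : ∀ i ∈ s, ∀ j ∈ s, i ≠ j → Disjoint (f i) (f j)) :
    (⋃ i ∈ (↑s : Set ι), f i).ncard = ∑ i ∈ s, (f i).ncard := by
  classical
  induction s using Finset.induction_on with
  | empty => simp
  | @insert a s ha ih =>
    have hmem : ∀ i ∈ s, i ∈ insert a s := fun i hi => Finset.mem_insert_of_mem hi
    have hfs : (⋃ i ∈ (↑s : Set ι), f i).Finite :=
      Set.Finite.biUnion (Finset.finite_toSet s) (fun i hi => hfin i (hmem i hi))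
    have hdisj : Disjoint (f a) (⋃ i ∈ (↑s : Set ι), f i) := by
      rw [Set.disjoint_right]
      rintro g hg hga
      simp only [Set.mem_iUnion, Finset.mem_coe, exists_prop] at hg
      obtain ⟨i, hi, hgi⟩ := hg
      have hne : a ≠ i := by rintro rfl; exact ha hi
      exact (Set.disjoint_left.mp
        (hd a (Finset.mem_insert_self a s) i (hmem i hi) hne)) hga hgi
    rw [Finset.coe_insert, Set.biUnion_insert, Finset.sum_insert ha,
      Set.ncard_union_eq hdisj (hfin a (Finset.mem_insert_self a s)) hfs,
      ih (fun i hi => hfin i (hmem i hi))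
        (fun i hi j hj hij => hd i (hmem i hi) j (hmem j hj) hij)]

lemma ncard_iUnion {α ι : Type*} [Fintype ι] (f : ι → Set α)
    (hfin : ∀ i, (f i).Finite)
    (hd : ∀ i j, i ≠ j → Disjoint (f i) (f j)) :
    (⋃ i, f i).ncard = ∑ i, (f i).ncard := by
  rw [show (⋃ i, f i) = ⋃ i ∈ ((Finset.univ : Finset ι) : Set ι), f i by simp]
  exact ncard_biUnion Finset.univ f (fun i _ => hfin i) (fun i _ j _ h => hd i j h)

variable {G : Type*} [Group G]

lemma inv_mem_of_closed {F : Set G} (hF : F⁻¹ = F) {a : G} (ha : a ∈ F) : a⁻¹ ∈ F := by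
  rw [← hF]; simpa [Set.mem_inv] using ha

lemma diff_inv_closed {F D : Set G} (hF : F⁻¹ = F) (hD : D⁻¹ = D) : (F \ D)⁻¹ = F \ D := by
  ext g
  simp only [Set.mem_inv, Set.mem_diff]
  constructor
  · rintro ⟨h1, h2⟩
    exact ⟨by simpa using inv_mem_of_closed hF h1,
      fun hg => h2 (by simpa using inv_mem_of_closed hD hg)⟩
  · rintro ⟨h1, h2⟩
    exact ⟨inv_mem_of_closed hF h1, fun hg => h2 (by simpa using inv_mem_of_closed hD hg)⟩

lemma exists_pair_closed {F : Set G} (hfin : F.Finite) (hF : F⁻¹ = F) (h2 : 2 ≤ F.ncard) :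
    ∃ D, D ⊆ F ∧ D⁻¹ = D ∧ D.ncard = 2 := by
  obtain ⟨a, ha⟩ := Set.nonempty_of_ncard_ne_zero (s := F) (by omega)
  by_cases hinv : a⁻¹ = a
  · have h1 : (F \ {a}).ncard = F.ncard - 1 := by
      rw [Set.ncard_diff (by simpa using ha), Set.ncard_singleton]
    obtain ⟨b, hbF, hba⟩ := Set.nonempty_of_ncard_ne_zero (s := F \ {a}) (by omega)
    simp only [Set.mem_singleton_iff] at hba
    by_cases hbinv : b⁻¹ = b
    · refine ⟨{a, b}, ?_, ?_, Set.ncard_pair (by tauto)⟩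
      · rintro g (rfl | rfl)
        · exact ha
        · exact hbF
      · rw [Set.inv_insert, Set.inv_singleton, hinv, hbinv]
    · refine ⟨{b, b⁻¹}, ?_, ?_, Set.ncard_pair (fun h => hbinv h.symm)⟩
      · rintro g (rfl | rfl)
        · exact hbF
        · exact inv_mem_of_closed hF hbF
      · rw [Set.inv_insert, Set.inv_singleton, inv_inv, Set.pair_comm]
  · refine ⟨{a, a⁻¹}, ?_, ?_, Set.ncard_pair (fun h => hinv h.symm)⟩
    · rintro g (rfl | rfl)
      · exact ha
      · exact inv_mem_of_closed hF ha
    · rw [Set.inv_insert, Set.inv_singleton, inv_inv, Set.pair_comm]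

lemma exists_closed_even : ∀ (j : ℕ) (F : Set G), F.Finite → F⁻¹ = F → 2 * j ≤ F.ncard →
    ∃ D, D ⊆ F ∧ D⁻¹ = D ∧ D.ncard = 2 * j := by
  intro j
  induction j with
  | zero => intro F _ _ _; exact ⟨∅, Set.empty_subset F, by simp, by simp⟩
  | succ j ih =>
    intro F hfin hF hle
    obtain ⟨D₂, hD₂F, hD₂inv, hD₂c⟩ := exists_pair_closed hfin hF (by omega)
    have hdiff : (F \ D₂).ncard = F.ncard - 2 := by
      rw [Set.ncard_diff hD₂F (hfin.subset hD₂F), hD₂c]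
    obtain ⟨D', hD'sub, hD'inv, hD'c⟩ := ih (F \ D₂) (hfin.diff)
      (diff_inv_closed hF hD₂inv) (by omega)
    refine ⟨D₂ ∪ D', Set.union_subset hD₂F (hD'sub.trans Set.diff_subset), ?_, ?_⟩
    · rw [Set.union_inv, hD₂inv, hD'inv]
    · rw [Set.ncard_union_eq ?_ (hfin.subset hD₂F) ((hfin.diff).subset hD'sub)]
      · omega
      · exact Set.disjoint_left.mpr fun g hg hg' => (hD'sub hg').2 hg

lemma exists_closed_subset {F : Set G} (hfin : F.Finite) (hF : F⁻¹ = F) {s : ℕ}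
    (hs : s ≤ F.ncard) (hpar : Even s ∨ s = F.ncard) :
    ∃ D, D ⊆ F ∧ D⁻¹ = D ∧ D.ncard = s := by
  rcases hpar with ⟨j, hj⟩ | rfl
  · obtain ⟨D, h1, h2, h3⟩ := exists_closed_even j F hfin hF (by omega)
    exact ⟨D, h1, h2, by omega⟩
  · exact ⟨F, subset_rfl, hF, rfl⟩

section Cosets

variable {G : Type*} [Group G]

/-- The right coset `H g`. -/
def RC (H : Subgroup G) (g : G) : Set G := {y | y * g⁻¹ ∈ H}

lemma mem_RC {H : Subgroup G} {g y : G} : y ∈ RC H g ↔ y * g⁻¹ ∈ H := Iff.rfl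

lemma RC_self (H : Subgroup G) (g : G) : g ∈ RC H g := by
  simp only [mem_RC, mul_inv_cancel]
  exact one_mem H

lemma RC_eq_of_mem {H : Subgroup G} {g y : G} (h : y ∈ RC H g) : RC H y = RC H g := by
  ext z
  simp only [mem_RC] at *
  constructor
  · intro hz
    have : z * g⁻¹ = (z * y⁻¹) * (y * g⁻¹) := by group
    rw [this]; exact mul_mem hz h
  · intro hz
    have : z * y⁻¹ = (z * g⁻¹) * (y * g⁻¹)⁻¹ := by group
    rw [this]; exact mul_mem hz (inv_mem h)

lemma RC_eq_RC {H : Subgroup G} {g g' z : G} (h1 : z ∈ RC H g) (h2 : z ∈ RC H g') :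
    RC H g = RC H g' := (RC_eq_of_mem h1).symm.trans (RC_eq_of_mem h2)

variable (H : Subgroup G) (x : G)

/-- The double coset `H x H` as a set. -/
def ASet : Set G := (H : Set G) * {x} * (H : Set G)

lemma mem_ASet {g : G} :
    g ∈ ASet H x ↔ ∃ h₁ h₂ : G, h₁ ∈ H ∧ h₂ ∈ H ∧ g = h₁ * x * h₂ := by
  unfold ASet
  constructor
  · rintro ⟨u, hu, h₂, hh₂, rfl⟩
    obtain ⟨h₁, hh₁, y, hy, rfl⟩ := hu
    rw [Set.mem_singleton_iff] at hy
    subst hy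
    exact ⟨h₁, h₂, hh₁, hh₂, rfl⟩
  · rintro ⟨h₁, h₂, hh₁, hh₂, rfl⟩
    exact ⟨h₁ * x, ⟨h₁, hh₁, x, rfl, rfl⟩, h₂, hh₂, rfl⟩

variable {H x}

lemma ASet_mul_left {h g : G} (hh : h ∈ H) (hg : g ∈ ASet H x) : h * g ∈ ASet H x := by
  rw [mem_ASet] at *
  obtain ⟨h₁, h₂, hh₁, hh₂, rfl⟩ := hg
  exact ⟨h * h₁, h₂, mul_mem hh hh₁, hh₂, by group⟩

lemma ASet_mul_right {h g : G} (hh : h ∈ H) (hg : g ∈ ASet H x) : g * h ∈ ASet H x := by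
  rw [mem_ASet] at *
  obtain ⟨h₁, h₂, hh₁, hh₂, rfl⟩ := hg
  exact ⟨h₁, h₂ * h, hh₁, mul_mem hh₂ hh, by group⟩

lemma RC_subset_ASet {g : G} (hg : g ∈ ASet H x) : RC H g ⊆ ASet H x := by
  intro y hy
  have : y = (y * g⁻¹) * g := by group
  rw [this]
  exact ASet_mul_left hy hg

lemma ASet_inv (heq : (H : Set G) * {x} * (H : Set G) = (H : Set G) * {x⁻¹} * (H : Set G)) :
    (ASet H x)⁻¹ = ASet H x := by
  show ((H : Set G) * {x} * (H : Set G))⁻¹ = _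
  rw [mul_inv_rev, mul_inv_rev, Set.inv_singleton, inv_coe_set, ← mul_assoc, ← heq]
  rfl

variable (H x) in
/-- The subgroup `H ⊓ x⁻¹ H x`. -/
def Ksub : Subgroup G := H ⊓ Subgroup.map (MulAut.conj x⁻¹).toMonoidHom H

lemma mem_Ksub {z : G} : z ∈ Ksub H x ↔ z ∈ H ∧ x * z * x⁻¹ ∈ H := by
  unfold Ksub
  rw [Subgroup.mem_inf]
  constructor
  · rintro ⟨h1, h2⟩
    refine ⟨h1, ?_⟩
    rw [Subgroup.mem_map] at h2
    obtain ⟨g, hg, hgz⟩ := h2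
    simp only [MulEquiv.coe_toMonoidHom, MulAut.conj_apply, inv_inv] at hgz
    subst hgz
    simpa [mul_assoc] using hg
  · rintro ⟨h1, h2⟩
    refine ⟨h1, ?_⟩
    rw [Subgroup.mem_map]
    exact ⟨x * z * x⁻¹, h2, by simp [MulAut.conj_apply]; group⟩

lemma Ksub_coe : (Ksub H x : Set G) = (H : Set G) ∩ ((fun g => x⁻¹ * g * x) '' (H : Set G)) := by
  ext z
  simp only [SetLike.mem_coe, mem_Ksub, Set.mem_inter_iff, Set.mem_image]
  constructor
  · rintro ⟨h1, h2⟩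
    exact ⟨h1, x * z * x⁻¹, h2, by group⟩
  · rintro ⟨h1, g, hg, hgz⟩
    subst hgz
    exact ⟨h1, by simpa [mul_assoc] using hg⟩

lemma fib_ncard (heq : (H : Set G) * {x} * (H : Set G) = (H : Set G) * {x⁻¹} * (H : Set G))
    {g₁ g₂ : G} (hg₁ : g₁ ∈ ASet H x) (hg₂ : g₂ ∈ ASet H x) :
    (RC H g₁ ∩ (RC H g₂)⁻¹).ncard = Nat.card (Ksub H x) := by
  obtain ⟨h₁, h₂, hh₁, hh₂, hg1e⟩ := (mem_ASet H x).mp hg₁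
  have hg₂' : g₂⁻¹ ∈ ASet H x := by
    rw [← ASet_inv heq]; simpa [Set.mem_inv] using hg₂
  obtain ⟨u, v, hu, hv, hg2e⟩ := (mem_ASet H x).mp hg₂'
  have key : RC H g₁ ∩ (RC H g₂)⁻¹ = (fun z => u * x * z * h₂) '' (Ksub H x : Set G) := by
    ext y
    simp only [Set.mem_inter_iff, mem_RC, Set.mem_inv, Set.mem_image, SetLike.mem_coe, mem_Ksub]
    constructor
    · rintro ⟨hy1, hy2⟩
      -- hy1 : y * g₁⁻¹ ∈ H, hy2 : y⁻¹ * g₂⁻¹ ∈ H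
      rw [hg1e] at hy1
      rw [hg2e] at hy2
      refine ⟨x⁻¹ * u⁻¹ * y * h₂⁻¹, ⟨?_, ?_⟩, by group⟩
      · have : x⁻¹ * u⁻¹ * y * h₂⁻¹ = v * (y⁻¹ * (u * x * v))⁻¹ * h₂⁻¹ := by group
        rw [this]
        exact mul_mem (mul_mem hv (inv_mem hy2)) (inv_mem hh₂)
      · have : x * (x⁻¹ * u⁻¹ * y * h₂⁻¹) * x⁻¹ = u⁻¹ * (y * (h₁ * x * h₂)⁻¹) * h₁ := by group
        rw [this]
        exact mul_mem (mul_mem (inv_mem hu) hy1) hh₁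
    · rintro ⟨z, ⟨hz1, hz2⟩, rfl⟩
      constructor
      · rw [hg1e]
        have : u * x * z * h₂ * (h₁ * x * h₂)⁻¹ = u * (x * z * x⁻¹) * h₁⁻¹ := by group
        rw [this]
        exact mul_mem (mul_mem hu hz2) (inv_mem hh₁)
      · rw [hg2e]
        have : (u * x * z * h₂)⁻¹ * (u * x * v) = h₂⁻¹ * z⁻¹ * v := by group
        rw [this]
        exact mul_mem (mul_mem (inv_mem hh₂) (inv_mem hz1)) hv
  rw [key, Set.ncard_image_of_injective _ (fun z z' hzz => by
    simpa using mul_left_cancel (mul_right_cancel hzz))]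
  rw [← Nat.card_coe_set_eq]
  rfl

end Cosets

section Numeric

lemma params (κ p b : ℕ) (hκ : 1 ≤ κ) (hp : 1 ≤ p) (hb : b ≤ 2 * p * κ) :
    ∃ s m t q : ℕ, s + m = b ∧ s ≤ κ ∧ (Even s ∨ s = κ) ∧ m = t + 2 * q ∧ t ≤ κ ∧
      q ≤ (p - 1) * κ := by
  have hM : (2 * p - 1) * κ + κ = 2 * p * κ := by
    have : 2 * p - 1 + 1 = 2 * p := by omega
    calc (2 * p - 1) * κ + κ = (2 * p - 1 + 1) * κ := by ring
    _ = 2 * p * κ := by rw [this]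
  have hQ : (2 * p - 1) * κ = 2 * ((p - 1) * κ) + κ := by
    have h1 : 2 * p - 1 = 2 * (p - 1) + 1 := by omega
    rw [h1]; ring
  set M := (2 * p - 1) * κ with hMdef
  -- choose s
  obtain ⟨s, hs1, hs2, hs3⟩ : ∃ s, s ≤ b ∧ s ≤ κ ∧ (Even s ∨ s = κ) ∧ b - s ≤ M := by
    by_cases h : b ≤ M
    · exact ⟨0, by omega, by omega, Or.inl Even.zero, by omega⟩
    · by_cases h2 : (b - M) % 2 = 0
      · exact ⟨b - M, by omega, by omega, Or.inl (Nat.even_iff.mpr (by omega)), by omega⟩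
      · by_cases h3 : b - M = κ
        · exact ⟨κ, by omega, le_rfl, Or.inr rfl, by omega⟩
        · exact ⟨b - M + 1, by omega, by omega, Or.inl (Nat.even_iff.mpr (by omega)), by omega⟩
  obtain ⟨hs3, hs4⟩ := hs3
  set m := b - s with hmdef
  -- choose t
  obtain ⟨t, ht1, ht2, ht3⟩ : ∃ t, t ≤ m ∧ t ≤ κ ∧ (m - t) % 2 = 0 ∧ m - t ≤ 2 * ((p - 1) * κ) := by
    by_cases h : m ≤ κ
    · exact ⟨m, le_rfl, by omega, by omega, by omega⟩
    · by_cases h2 : (m - κ) % 2 = 0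
      · exact ⟨κ, by omega, le_rfl, by omega, by omega⟩
      · refine ⟨κ - 1, by omega, by omega, by omega, by omega⟩
  obtain ⟨ht3, ht4⟩ := ht3
  exact ⟨s, m, t, (m - t) / 2, by omega, hs2, hs3, by omega, ht2, by omega⟩

/-- The weight function on distances. -/
def Ffun (p κ t q : ℕ) : ℕ → ℕ := fun k =>
  if k = 0 then 0 else if k = p then t else min κ (q - (min k (2 * p - k) - 1) * κ)

lemma Ffun_le {p κ t q : ℕ} (ht : t ≤ κ) (k : ℕ) : Ffun p κ t q k ≤ κ := by
  unfold Ffun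
  split_ifs with h1 h2
  · omega
  · exact ht
  · exact min_le_left _ _

lemma Ffun_symm {p κ t q : ℕ} {k : ℕ} (hk1 : 1 ≤ k) (hk2 : k ≤ 2 * p - 1) :
    Ffun p κ t q (2 * p - k) = Ffun p κ t q k := by
  unfold Ffun
  have e1 : ¬(2 * p - k = 0) := by omega
  have e2 : ¬(k = 0) := by omega
  have e3 : (2 * p - k = p) ↔ (k = p) := by omega
  have e4 : min (2 * p - k) (2 * p - (2 * p - k)) = min k (2 * p - k) := by omega
  rw [if_neg e1, if_neg e2, e4]
  by_cases h : k = p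
  · rw [if_pos (e3.mpr h), if_pos h]
  · rw [if_neg (fun hh => h (e3.mp hh)), if_neg h]

lemma Ffun_sum (p κ t q : ℕ) (hp : 1 ≤ p) (ht : t ≤ κ) (hq : q ≤ (p - 1) * κ) :
    ∑ k ∈ Finset.range (2 * p), Ffun p κ t q k = t + 2 * q := by
  have hsplit : ∑ k ∈ Finset.range (2 * p), Ffun p κ t q k =
      ∑ k ∈ Finset.range (p + 1), Ffun p κ t q k +
      ∑ k ∈ Finset.Ico (p + 1) (2 * p), Ffun p κ t q k := by
    simp only [Finset.range_eq_Ico]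
    rw [Finset.sum_Ico_consecutive _ (by omega : 0 ≤ p + 1) (by omega : p + 1 ≤ 2 * p)]
  have htail : ∑ k ∈ Finset.Ico (p + 1) (2 * p), Ffun p κ t q k = q := by
    rw [Finset.sum_Ico_eq_sum_range]
    have h2 : 2 * p - (p + 1) = p - 1 := by omega
    rw [h2]
    have hcong : ∀ i ∈ Finset.range (p - 1), Ffun p κ t q (p + 1 + i) =
        (fun j => min κ (q - j * κ)) (p - 1 - 1 - i) := by
      intro i hi
      rw [Finset.mem_range] at hi
      unfold Ffun
      rw [if_neg (by omega), if_neg (by omega)]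
      have : min (p + 1 + i) (2 * p - (p + 1 + i)) - 1 = p - 1 - 1 - i := by omega
      rw [this]
    rw [Finset.sum_congr rfl hcong, Finset.sum_range_reflect (fun j => min κ (q - j * κ)) (p - 1)]
    exact waterfill κ (p - 1) q hq
  have hhead : ∑ k ∈ Finset.range (p + 1), Ffun p κ t q k = q + t := by
    have hFp : Ffun p κ t q p = t := by
      unfold Ffun; rw [if_neg (by omega), if_pos rfl]
    have hF0 : Ffun p κ t q 0 = 0 := by unfold Ffun; rw [if_pos rfl]
    have hcong : ∀ i ∈ Finset.range (p - 1), Ffun p κ t q (i + 1) = min κ (q - i * κ) := by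
      intro i hi
      rw [Finset.mem_range] at hi
      unfold Ffun
      rw [if_neg (by omega), if_neg (by omega)]
      have : min (i + 1) (2 * p - (i + 1)) - 1 = i := by omega
      rw [this]
    obtain ⟨p', hp'⟩ : ∃ p', p = p' + 1 := ⟨p - 1, by omega⟩
    have hp'' : p' = p - 1 := by omega
    rw [Finset.sum_range_succ, hFp]
    have hmain : ∑ k ∈ Finset.range p, Ffun p κ t q k = q := by
      calc ∑ k ∈ Finset.range p, Ffun p κ t q k
          = ∑ k ∈ Finset.range (p' + 1), Ffun p κ t q k := by rw [hp']
        _ = (∑ k ∈ Finset.range p', Ffun p κ t q (k + 1)) + Ffun p κ t q 0 :=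
            Finset.sum_range_succ' _ _
        _ = q := by
            rw [hF0, Finset.sum_congr rfl (by rw [hp'']; exact hcong)]
            rw [hp'', waterfill κ (p - 1) q hq]
            omega
    rw [hmain]
  omega

end Numeric

end StmtAux

open StmtAux

theorem stmt6 {G : Type*} [Group G] [Fintype G] (H : Subgroup G) (x : G)
    (hx : x ∉ H)
    (heq : (H : Set G) * {x} * (H : Set G) = (H : Set G) * {x⁻¹} * (H : Set G))
    (heven : Even (Nat.card H /
      ((H : Set G) ∩ ((fun g => x⁻¹ * g * x) '' (H : Set G))).ncard)) :
    ∀ b : ℕ, b ≤ Nat.card H →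
      ∃ T : Fin b → Set G,
        (∀ i, IsRightTransversalOn H (T i) ((H : Set G) * {x} * (H : Set G))) ∧
        (Pairwise fun i j => Disjoint (T i) (T j)) ∧
        (⋃ i, T i)⁻¹ = ⋃ i, T i := by
  intro b hb
  classical
  -- basic cardinality setup
  have hκcoe : ((H : Set G) ∩ ((fun g => x⁻¹ * g * x) '' (H : Set G))).ncard
      = Nat.card (Ksub H x) := by
    rw [← Ksub_coe, ← Nat.card_coe_set_eq]; rfl
  set κ := Nat.card (Ksub H x) with hκdef
  have hκpos : 0 < κ := Nat.card_pos
  set K' : Subgroup H := (Ksub H x).subgroupOf H with hK'def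
  have hK'card : Nat.card K' = κ :=
    Nat.card_congr (Subgroup.subgroupOfEquivOfLe inf_le_left).toEquiv
  set n := Nat.card (H ⧸ K') with hndef
  have hNn : κ * n = Nat.card H := by
    rw [← hK'card, hndef, ← Subgroup.index_eq_card]
    exact Subgroup.card_mul_index K'
  have hneven : Even n := by
    have hdiv : Nat.card H / ((H : Set G) ∩ ((fun g => x⁻¹ * g * x) '' (H : Set G))).ncard
        = n := by
      rw [hκcoe, ← hNn, Nat.mul_div_cancel_left _ hκpos]
    rwa [hdiv] at heven
  have hnpos : 0 < n := Nat.card_pos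
  haveI : NeZero n := ⟨by omega⟩
  set p := n / 2 with hpdef
  have hn2p : n = 2 * p := by
    obtain ⟨r, hr⟩ := hneven; omega
  have hp1 : 1 ≤ p := by omega
  have h2pκ : 2 * p * κ = Nat.card H := by rw [← hNn, hn2p]; ring
  obtain ⟨s, m, t, q, hsm, hsκ, hspar, hmtq, htκ, hqpκ⟩ :=
    params κ p b hκpos hp1 (by omega)
  -- indexing of the right cosets
  let e1 : (H ⧸ K') ≃ Fin n := Finite.equivFinOfCardEq rfl
  let e2 : ZMod n ≃ Fin n :=
    Finite.equivFinOfCardEq (by rw [Nat.card_eq_fintype_card, ZMod.card])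
  let eqv : ZMod n ≃ (H ⧸ K') := e2.trans e1.symm
  let ρ : ZMod n → G := fun i => x * ((Quotient.out (eqv i) : H) : G)⁻¹
  have hρA : ∀ i, ρ i ∈ ASet H x := by
    intro i
    refine (mem_ASet H x).mpr ⟨1, ((Quotient.out (eqv i) : H) : G)⁻¹, one_mem H,
      inv_mem (Quotient.out (eqv i)).2, ?_⟩
    show x * ((Quotient.out (eqv i) : H) : G)⁻¹ = 1 * x * ((Quotient.out (eqv i) : H) : G)⁻¹
    group
  have hρinj : ∀ i j : ZMod n, ρ i ∈ RC H (ρ j) → i = j := by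
    intro i j hij
    set a := Quotient.out (eqv i) with hadef
    set c := Quotient.out (eqv j) with hcdef
    have hkey : (x * (a : G)⁻¹) * (x * (c : G)⁻¹)⁻¹ = x * ((a : G)⁻¹ * (c : G)) * x⁻¹ := by
      group
    rw [mem_RC, hkey] at hij
    have hmem : ((a⁻¹ * c : H) : G) ∈ Ksub H x := by
      rw [mem_Ksub]
      exact ⟨(a⁻¹ * c : H).2, by push_cast; exact hij⟩
    have hq : (QuotientGroup.mk a : H ⧸ K') = QuotientGroup.mk c :=
      QuotientGroup.eq.mpr (Subgroup.mem_subgroupOf.mpr hmem)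
    rw [QuotientGroup.out_eq', QuotientGroup.out_eq'] at hq
    exact eqv.injective hq
  have hρcover : ∀ g ∈ ASet H x, ∃ i, g ∈ RC H (ρ i) := by
    intro g hg
    obtain ⟨h₁, h₂, hh₁, hh₂, rfl⟩ := (mem_ASet H x).mp hg
    refine ⟨eqv.symm (QuotientGroup.mk (⟨h₂, hh₂⟩ : H)⁻¹), ?_⟩
    set i := eqv.symm (QuotientGroup.mk (⟨h₂, hh₂⟩ : H)⁻¹) with hidef
    set c := Quotient.out (eqv i) with hcdef
    have hqc : (QuotientGroup.mk c : H ⧸ K') = QuotientGroup.mk (⟨h₂, hh₂⟩ : H)⁻¹ := by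
      rw [hcdef, QuotientGroup.out_eq', hidef, eqv.apply_symm_apply]
    have hK : c⁻¹ * (⟨h₂, hh₂⟩ : H)⁻¹ ∈ K' := QuotientGroup.eq.mp hqc
    have hK2 : (⟨h₂, hh₂⟩ : H) * c ∈ K' := by
      have := inv_mem hK
      simpa using this
    have hK3 : x * (h₂ * (c : G)) * x⁻¹ ∈ H := by
      have := (mem_Ksub.mp (Subgroup.mem_subgroupOf.mp hK2)).2
      simpa using this
    rw [mem_RC]
    have : h₁ * x * h₂ * (x * (c : G)⁻¹)⁻¹ = h₁ * (x * (h₂ * (c : G)) * x⁻¹) := by group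
    rw [this]
    exact mul_mem hh₁ hK3
  have hCdisj : ∀ i j : ZMod n, i ≠ j → Disjoint (RC H (ρ i)) (RC H (ρ j)) := by
    intro i j hne
    rw [Set.disjoint_left]
    intro z hzi hzj
    exact hne (hρinj i j ((RC_eq_RC hzi hzj) ▸ RC_self H (ρ i)))
  -- the fibres
  set Fib : ZMod n → ZMod n → Set G := fun i j => RC H (ρ i) ∩ (RC H (ρ j))⁻¹ with hFibdef
  have hFibinv : ∀ i j, (Fib i j)⁻¹ = Fib j i := by
    intro i j
    rw [hFibdef]
    simp only [Set.inter_inv, inv_inv]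
    exact Set.inter_comm _ _
  have hFibcard : ∀ i j, (Fib i j).ncard = κ := fun i j => fib_ncard heq (hρA i) (hρA j)
  have hFibsub : ∀ i j, Fib i j ⊆ RC H (ρ i) := fun i j => Set.inter_subset_left
  have hFibdisj : ∀ i j j', j ≠ j' → Disjoint (Fib i j) (Fib i j') := by
    intro i j j' hne
    rw [Set.disjoint_left]
    intro z hz hz'
    exact Set.disjoint_left.mp (hCdisj j j' hne) (Set.mem_inv.mp hz.2) (Set.mem_inv.mp hz'.2)
  have hFibcover : ∀ i, ∀ z ∈ RC H (ρ i), ∃ j, z ∈ Fib i j := by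
    intro i z hz
    have hzA : z ∈ ASet H x := RC_subset_ASet (hρA i) hz
    have hzA' : z⁻¹ ∈ ASet H x := by
      rw [← ASet_inv heq]
      simpa [Set.mem_inv] using hzA
    obtain ⟨j, hj⟩ := hρcover z⁻¹ hzA'
    exact ⟨j, hz, Set.mem_inv.mpr hj⟩
  -- the weights
  set cz : ZMod n → ℕ := fun d => Ffun p κ t q d.val with hczdef
  have hczle : ∀ d, cz d ≤ κ := fun d => Ffun_le htκ _
  have hcz0 : cz 0 = 0 := by
    rw [hczdef]
    simp only [ZMod.val_zero]
    unfold Ffun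
    rw [if_pos rfl]
  have hczsymm : ∀ d, cz (-d) = cz d := by
    intro d
    by_cases hd : d = 0
    · rw [hd, neg_zero]
    · rw [hczdef]
      simp only
      rw [ZMod.neg_val, if_neg hd]
      have h1 : 1 ≤ d.val := by
        have := (ZMod.val_eq_zero d).not.mpr hd
        omega
      have h2 : d.val ≤ 2 * p - 1 := by
        have := ZMod.val_lt d
        omega
      have h3 : n - d.val = 2 * p - d.val := by omega
      rw [h3]
      exact Ffun_symm h1 (by omega)
  have hczsum : ∑ d : ZMod n, cz d = m := by
    have hsum2 : ∑ d : ZMod n, cz d = ∑ k ∈ Finset.range n, Ffun p κ t q k := by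
      apply Finset.sum_nbij' (i := fun d : ZMod n => d.val)
        (j := fun k : ℕ => (k : ZMod n))
      · intro a _
        exact Finset.mem_range.mpr (ZMod.val_lt a)
      · intro a _
        exact Finset.mem_univ _
      · intro a _
        exact ZMod.natCast_zmod_val a
      · intro a ha
        exact ZMod.val_cast_of_lt (Finset.mem_range.mp ha)
      · intro a _
        rfl
    rw [hsum2, hn2p, Ffun_sum p κ t q hp1 htκ hqpκ, hmtq]
  -- choose the off-diagonal and diagonal pieces
  have hchoice1 : ∀ i j : ZMod n, ∃ P, P ⊆ Fib i j ∧ P.ncard = cz (j - i) := by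
    intro i j
    obtain ⟨P, h1, h2⟩ := Set.exists_subset_card_eq
      (s := Fib i j) (n := cz (j - i)) (by rw [hFibcard]; exact hczle _)
    exact ⟨P, h1, h2⟩
  choose Qo hQo1 hQo2 using hchoice1
  have hchoice2 : ∀ i : ZMod n, ∃ D, D ⊆ Fib i i ∧ D⁻¹ = D ∧ D.ncard = s := by
    intro i
    refine exists_closed_subset (Set.toFinite _) (hFibinv i i) ?_ ?_
    · rw [hFibcard]; exact hsκ
    · rw [hFibcard]; exact hspar
  choose Qd hQd1 hQd2 hQd3 using hchoice2
  set P : ZMod n → ZMod n → Set G := fun i j =>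
    if i = j then Qd i else if i.val < j.val then Qo i j else (Qo j i)⁻¹ with hPdef
  have hPsub : ∀ i j, P i j ⊆ Fib i j := by
    intro i j
    rw [hPdef]
    simp only
    split_ifs with h1 h2
    · subst h1; exact hQd1 i
    · exact hQo1 i j
    · intro g hg
      rw [← hFibinv j i, Set.mem_inv]
      exact hQo1 j i (Set.mem_inv.mp hg)
  have hPinv : ∀ i j, (P i j)⁻¹ = P j i := by
    intro i j
    by_cases hij : i = j
    · subst hij
      rw [hPdef]
      simp only [if_pos rfl]
      exact hQd2 i
    · have hvne : i.val ≠ j.val := fun h => hij (ZMod.val_injective n h)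
      rw [hPdef]
      simp only [if_neg hij, if_neg (Ne.symm hij)]
      rcases lt_or_gt_of_ne hvne with h | h
      · rw [if_pos h, if_neg (by omega)]
      · rw [if_neg (by omega), if_pos h, inv_inv]
  have hPcard : ∀ i j, (P i j).ncard = if i = j then s else cz (j - i) := by
    intro i j
    by_cases hij : i = j
    · subst hij
      rw [hPdef]
      simp only [if_pos rfl]
      exact hQd3 i
    · have hvne : i.val ≠ j.val := fun h => hij (ZMod.val_injective n h)
      rw [hPdef]
      simp only [if_neg hij]
      rcases lt_or_gt_of_ne hvne with h | h
      · rw [if_pos h]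
        exact hQo2 i j
      · rw [if_neg (by omega)]
        have hinv : ((Qo j i)⁻¹).ncard = (Qo j i).ncard := by
          rw [← Set.image_inv_eq_inv]
          exact Set.ncard_image_of_injective _ inv_injective
        rw [hinv, hQo2 j i]
        have : i - j = -(j - i) := by ring
        rw [this, hczsymm]
  -- the set S
  set S : Set G := ⋃ i, ⋃ j, P i j with hSdef
  have hPsubA : ∀ i j, P i j ⊆ ASet H x := fun i j =>
    (hPsub i j).trans ((hFibsub i j).trans (RC_subset_ASet (hρA i)))
  have hSsub : S ⊆ ASet H x := by
    rw [hSdef]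
    exact Set.iUnion_subset fun i => Set.iUnion_subset fun j => hPsubA i j
  have hSinv : S⁻¹ = S := by
    rw [hSdef]
    have h1 : (⋃ i, ⋃ j, P i j)⁻¹ = ⋃ i, ⋃ j, (P i j)⁻¹ := by
      rw [Set.iUnion_inv]
      exact Set.iUnion_congr fun i => Set.iUnion_inv _
    rw [h1]
    simp_rw [hPinv]
    exact Set.iUnion_comm _
  have hScap : ∀ i, S ∩ RC H (ρ i) = ⋃ j, P i j := by
    intro i
    ext z
    constructor
    · rintro ⟨hzS, hzC⟩
      rw [hSdef] at hzS
      simp only [Set.mem_iUnion] at hzS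
      obtain ⟨i', j', hz⟩ := hzS
      have hzi' : z ∈ RC H (ρ i') := hFibsub i' j' (hPsub i' j' hz)
      have : i' = i := by
        by_contra hne
        exact Set.disjoint_left.mp (hCdisj i' i hne) hzi' hzC
      subst this
      exact Set.mem_iUnion.mpr ⟨j', hz⟩
    · intro hz
      rw [Set.mem_iUnion] at hz
      obtain ⟨j, hzj⟩ := hz
      refine ⟨?_, hFibsub i j (hPsub i j hzj)⟩
      rw [hSdef]
      simp only [Set.mem_iUnion]
      exact ⟨i, j, hzj⟩
  have hcount : ∀ i, (⋃ j, P i j).ncard = b := by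
    intro i
    rw [ncard_iUnion _ (fun j => Set.toFinite _)
      (fun j j' hne => ((hFibdisj i j j' hne).mono (hPsub i j) (hPsub i j')))]
    have hterm : ∀ j : ZMod n, (P i j).ncard = (if j = i then s else 0) + cz (j - i) := by
      intro j
      rw [hPcard i j]
      by_cases h : j = i
      · subst h
        rw [if_pos rfl, if_pos rfl, sub_self, hcz0]
        omega
      · rw [if_neg (fun hh => h hh.symm), if_neg h, Nat.zero_add]
    rw [Finset.sum_congr rfl (fun j _ => hterm j), Finset.sum_add_distrib,
      Finset.sum_ite_eq' Finset.univ i (fun _ => s)]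
    have hre : ∑ j : ZMod n, cz (j - i) = ∑ d : ZMod n, cz d :=
      Fintype.sum_equiv (Equiv.subRight i) _ _ (fun j => rfl)
    rw [if_pos (Finset.mem_univ i), hre, hczsum]
    omega
  have hfinal : ∀ g ∈ ASet H x, (S ∩ RC H g).ncard = b := by
    intro g hg
    obtain ⟨i, hi⟩ := hρcover g hg
    rw [RC_eq_of_mem hi, hScap i, hcount i]
  -- build the transversals
  have hcard : ∀ i, Nat.card ↥(S ∩ RC H (ρ i)) = b := by
    intro i
    rw [Nat.card_coe_set_eq, hScap i, hcount i]
  let E : ∀ i : ZMod n, Fin b ≃ ↥(S ∩ RC H (ρ i)) :=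
    fun i => (Finite.equivFinOfCardEq (hcard i)).symm
  let T : Fin b → Set G := fun k => ⋃ i, ({((E i k : G))} : Set G)
  have hTmem : ∀ (k : Fin b) (z : G), z ∈ T k ↔ ∃ i, z = (E i k : G) := by
    intro k z
    show z ∈ ⋃ i, ({((E i k : G))} : Set G) ↔ _
    simp only [Set.mem_iUnion, Set.mem_singleton_iff]
  have hTE : ∀ (k : Fin b) (i : ZMod n), (E i k : G) ∈ T k := fun k i => (hTmem k _).mpr ⟨i, rfl⟩
  refine ⟨T, ?_, ?_, ?_⟩
  · intro k
    constructor
    · intro z hz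
      obtain ⟨i, rfl⟩ := (hTmem k z).mp hz
      exact hSsub (E i k).2.1
    · intro g hg
      obtain ⟨i, hgi⟩ := hρcover g hg
      have hRCg : RC H g = RC H (ρ i) := RC_eq_of_mem hgi
      refine ⟨(E i k : G), ⟨hTE k i, ?_⟩, ?_⟩
      · have h2 : (E i k : G) ∈ RC H (ρ i) := (E i k).2.2
        show (E i k : G) ∈ RC H g
        rw [hRCg]
        exact h2
      · rintro z ⟨hzT, hzg⟩
        obtain ⟨i', rfl⟩ := (hTmem k z).mp hzT
        have hzi' : (E i' k : G) ∈ RC H (ρ i') := (E i' k).2.2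
        have hzi : (E i' k : G) ∈ RC H (ρ i) := by
          have h3 : ((E i' k : G)) ∈ RC H g := hzg
          rw [hRCg] at h3
          exact h3
        have : i' = i := by
          by_contra hne
          exact Set.disjoint_left.mp (hCdisj i' i hne) hzi' hzi
        subst this
        rfl
  · intro k l hkl
    rw [Set.disjoint_left]
    intro z hzk hzl
    obtain ⟨i, hik⟩ := (hTmem k z).mp hzk
    obtain ⟨i', hil⟩ := (hTmem l z).mp hzl
    have hzi : z ∈ RC H (ρ i) := by rw [hik]; exact (E i k).2.2
    have hzi' : z ∈ RC H (ρ i') := by rw [hil]; exact (E i' l).2.2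
    have hii : i = i' := by
      by_contra hne
      exact Set.disjoint_left.mp (hCdisj i i' hne) hzi hzi'
    subst hii
    apply hkl
    have hEeq : E i k = E i l := Subtype.ext (by rw [← hik, ← hil])
    exact (E i).injective hEeq
  · have hU : ⋃ k, T k = S := by
      apply Set.Subset.antisymm
      · intro z hz
        rw [Set.mem_iUnion] at hz
        obtain ⟨k, hk⟩ := hz
        obtain ⟨i, rfl⟩ := (hTmem k z).mp hk
        exact (E i k).2.1
      · intro z hz
        obtain ⟨i, hi⟩ := hρcover z (hSsub hz)
        have hzmem : z ∈ S ∩ RC H (ρ i) := ⟨hz, hi⟩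
        refine Set.mem_iUnion.mpr ⟨(E i).symm ⟨z, hzmem⟩, ?_⟩
        refine (hTmem _ z).mpr ⟨i, ?_⟩
        rw [Equiv.apply_symm_apply]
    rw [hU, hSinv]
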